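/- For all f, g ∈ Δ, the maximal domain of the Jacobi expression ℓ[·] in L²((-1,1); (1-x²)^{-1}dx), one has lim_{x→1⁻} f'(x)ḡ(x) = 0 and lim_{x→-1⁺} f'(x)ḡ(x) = 0 (the strong limit-point condition at both endpoints). -/

import Mathlib

open MeasureTheory Set Filter Topology

/-- Membership in the maximal domain `Δ` of the Jacobi expression
`ℓ[y](x) = -(1-x²)y''(x) + k·y(x)` in `L²((-1,1); (1-x²)⁻¹ dx)`. -/
def InJacobiMaxDomain (k : ℝ) (f f' f'' : ℝ → ℂ) : Prop :=
  (∀ x ∈ Ioo (-1 : ℝ) 1, ∀ y ∈ Ioo (-1 : ℝ) 1, IntervalIntegrable f' volume x y) ∧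
  (∀ x ∈ Ioo (-1 : ℝ) 1, ∀ y ∈ Ioo (-1 : ℝ) 1, IntervalIntegrable f'' volume x y) ∧
  (∀ x ∈ Ioo (-1 : ℝ) 1, ∀ y ∈ Ioo (-1 : ℝ) 1, f y - f x = ∫ t in x..y, f' t) ∧
  (∀ x ∈ Ioo (-1 : ℝ) 1, ∀ y ∈ Ioo (-1 : ℝ) 1, f' y - f' x = ∫ t in x..y, f'' t) ∧
  IntegrableOn (fun x => ‖f x‖ ^ 2 * (1 - x ^ 2)⁻¹) (Ioo (-1 : ℝ) 1) ∧
  IntegrableOn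
    (fun x => ‖-((1 - x ^ 2 : ℝ) : ℂ) * f'' x + (k : ℂ) * f x‖ ^ 2 * (1 - x ^ 2)⁻¹)
    (Ioo (-1 : ℝ) 1)

/-- Hypothesis package for one function in the (modified) maximal domain. -/
structure JHyp (u u' u'' : ℝ → ℂ) : Prop where
  hi1 : ∀ x ∈ Ioo (-1:ℝ) 1, ∀ y ∈ Ioo (-1:ℝ) 1, IntervalIntegrable u' volume x y
  hi2 : ∀ x ∈ Ioo (-1:ℝ) 1, ∀ y ∈ Ioo (-1:ℝ) 1, IntervalIntegrable u'' volume x y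
  hftc1 : ∀ x ∈ Ioo (-1:ℝ) 1, ∀ y ∈ Ioo (-1:ℝ) 1, u y - u x = ∫ t in x..y, u' t
  hftc2 : ∀ x ∈ Ioo (-1:ℝ) 1, ∀ y ∈ Ioo (-1:ℝ) 1, u' y - u' x = ∫ t in x..y, u'' t
  h0 : IntegrableOn (fun x => ‖u x‖ ^ 2 * (1 - x ^ 2)⁻¹) (Ioo (-1:ℝ) 1)
  h2 : IntegrableOn (fun x => ‖u'' x‖ ^ 2 * (1 - x ^ 2)) (Ioo (-1:ℝ) 1)

lemma cover_Ioo : Ioo (-1:ℝ) 1 = ⋃ n : ℕ, Ioc (-1 + ((n:ℝ)+2)⁻¹) (1 - ((n:ℝ)+2)⁻¹) := by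
  ext x
  simp only [mem_Ioo, mem_iUnion, mem_Ioc]
  constructor
  · rintro ⟨h1, h2⟩
    obtain ⟨n, hn⟩ := exists_nat_gt (max (x+1)⁻¹ (1-x)⁻¹)
    have hx1 : (0:ℝ) < x + 1 := by linarith
    have hx2 : (0:ℝ) < 1 - x := by linarith
    refine ⟨n, ?_, ?_⟩
    · have : (x+1)⁻¹ < (n:ℝ) + 2 := lt_of_le_of_lt (le_max_left _ _) (by linarith)
      have := (inv_lt_inv₀ (by positivity) (by positivity)).mpr this
      rw [inv_inv] at this
      linarith
    · have : (1-x)⁻¹ < (n:ℝ) + 2 := lt_of_le_of_lt (le_max_right _ _) (by linarith)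
      have := (inv_lt_inv₀ (by positivity) (by positivity)).mpr this
      rw [inv_inv] at this
      linarith
  · rintro ⟨n, h1, h2⟩
    have h3 : (0:ℝ) < ((n:ℝ)+2)⁻¹ := by positivity
    constructor <;> linarith

lemma inv_le_half (n : ℕ) : ((n:ℝ)+2)⁻¹ ≤ 1/2 := by
  have : (0:ℝ) ≤ (n:ℝ) := Nat.cast_nonneg n
  have := inv_anti₀ (show (0:ℝ) < 2 by norm_num) (by linarith : (2:ℝ) ≤ (n:ℝ)+2)
  linarith

lemma endpts_mem (n : ℕ) : (-1 + ((n:ℝ)+2)⁻¹) ∈ Ioo (-1:ℝ) 1 ∧ (1 - ((n:ℝ)+2)⁻¹) ∈ Ioo (-1:ℝ) 1 := by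
  have h1 : (0:ℝ) < ((n:ℝ)+2)⁻¹ := by positivity
  have h2 : ((n:ℝ)+2)⁻¹ ≤ 2⁻¹ := by
    apply inv_anti₀ (by norm_num)
    have : (0:ℝ) ≤ (n:ℝ) := Nat.cast_nonneg n
    linarith
  have h2' : ((n:ℝ)+2)⁻¹ ≤ 1/2 := by linarith
  refine ⟨⟨by nlinarith, by nlinarith⟩, ⟨by nlinarith, by nlinarith⟩⟩

lemma JHyp.of_dom {k : ℝ} (hk : 0 ≤ k) {f f' f'' : ℝ → ℂ}
    (hf : InJacobiMaxDomain k f f' f'') : JHyp f f' f'' := by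
  obtain ⟨hi1, hi2, hftc1, hftc2, h0, hL⟩ := hf
  refine ⟨hi1, hi2, hftc1, hftc2, h0, ?_⟩
  -- a.e. strong measurability of f'' on Ioo (-1) 1
  have hmeas : AEStronglyMeasurable f'' (volume.restrict (Ioo (-1:ℝ) 1)) := by
    rw [cover_Ioo, aestronglyMeasurable_iUnion_iff]
    intro n
    obtain ⟨ha, hb⟩ := endpts_mem n
    have hab : (-1 + ((n:ℝ)+2)⁻¹) ≤ (1 - ((n:ℝ)+2)⁻¹) := by
      have := inv_le_half n; linarith
    have := (intervalIntegrable_iff_integrableOn_Ioc_of_le hab).mp (hi2 _ ha _ hb)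
    exact this.aestronglyMeasurable
  -- pointwise domination
  have hdom : ∀ x ∈ Ioo (-1:ℝ) 1,
      ‖‖f'' x‖ ^ 2 * (1 - x ^ 2)‖ ≤
        2 * (‖-((1 - x ^ 2 : ℝ) : ℂ) * f'' x + (k : ℂ) * f x‖ ^ 2 * (1 - x ^ 2)⁻¹)
          + 2 * k ^ 2 * (‖f x‖ ^ 2 * (1 - x ^ 2)⁻¹) := by
    intro x hx
    simp only [mem_Ioo] at hx
    have hP : (0:ℝ) < 1 - x ^ 2 := by nlinarith [hx.1, hx.2]
    set P : ℝ := 1 - x ^ 2 with hPdef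
    set A : ℝ := ‖-((P : ℝ) : ℂ) * f'' x + (k : ℂ) * f x‖ with hA
    set B : ℝ := ‖f x‖ with hB
    have hA0 : 0 ≤ A := norm_nonneg _
    have hB0 : 0 ≤ B := norm_nonneg _
    have hW0 : 0 ≤ ‖f'' x‖ := norm_nonneg _
    have key : P * ‖f'' x‖ ≤ A + k * B := by
      have : -((P : ℝ) : ℂ) * f'' x
          = (-((P : ℝ) : ℂ) * f'' x + (k : ℂ) * f x) - (k : ℂ) * f x := by ring
      calc P * ‖f'' x‖ = ‖-((P : ℝ) : ℂ) * f'' x‖ := by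
            rw [norm_mul, norm_neg, Complex.norm_real, Real.norm_of_nonneg hP.le]
        _ = ‖(-((P : ℝ) : ℂ) * f'' x + (k : ℂ) * f x) - (k : ℂ) * f x‖ := by rw [← this]
        _ ≤ A + ‖(k : ℂ) * f x‖ := norm_sub_le _ _
        _ = A + k * B := by
            rw [norm_mul, Complex.norm_real, Real.norm_of_nonneg hk]
    have habs : ‖‖f'' x‖ ^ 2 * P‖ = ‖f'' x‖ ^ 2 * P := by
      rw [Real.norm_of_nonneg (by positivity)]
    rw [habs]
    have hPinv : P * P⁻¹ = 1 := mul_inv_cancel₀ hP.ne'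
    have step1 : (P * ‖f'' x‖) ^ 2 ≤ 2 * A ^ 2 + 2 * (k * B) ^ 2 := by
      nlinarith [sq_nonneg (A - k*B),
        mul_nonneg (sub_nonneg.mpr key)
          (add_nonneg (add_nonneg hA0 (mul_nonneg hk hB0)) (mul_nonneg hP.le hW0))]
    have step2 : ‖f'' x‖ ^ 2 * P = (P * ‖f'' x‖) ^ 2 * P⁻¹ := by
      field_simp
    rw [step2]
    calc (P * ‖f'' x‖) ^ 2 * P⁻¹ ≤ (2 * A ^ 2 + 2 * (k * B) ^ 2) * P⁻¹ :=
          mul_le_mul_of_nonneg_right step1 (inv_nonneg.mpr hP.le)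
      _ = 2 * (A ^ 2 * P⁻¹) + 2 * k ^ 2 * (B ^ 2 * P⁻¹) := by ring
  -- conclude integrability by domination
  have hg : IntegrableOn (fun x =>
      2 * (‖-((1 - x ^ 2 : ℝ) : ℂ) * f'' x + (k : ℂ) * f x‖ ^ 2 * (1 - x ^ 2)⁻¹)
        + 2 * k ^ 2 * (‖f x‖ ^ 2 * (1 - x ^ 2)⁻¹)) (Ioo (-1:ℝ) 1) :=
    (hL.const_mul 2).add (h0.const_mul (2 * k ^ 2))
  refine Integrable.mono' hg ?_ ?_
  · exact ((hmeas.norm.pow 2).mul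
      ((continuous_const.sub (continuous_pow 2)).aestronglyMeasurable.restrict))
  · exact (ae_restrict_iff' measurableSet_Ioo).mpr (Eventually.of_forall hdom)

lemma neg_mem_Ioo {x : ℝ} (hx : x ∈ Ioo (-1:ℝ) 1) : -x ∈ Ioo (-1:ℝ) 1 := by
  simp only [mem_Ioo] at hx ⊢; constructor <;> linarith [hx.1, hx.2]

lemma integrableOn_symm {φ : ℝ → ℝ} (h : IntegrableOn φ (Ioo (-1:ℝ) 1)) :
    IntegrableOn (fun x => φ (-x)) (Ioo (-1:ℝ) 1) := by
  have hemb : MeasurableEmbedding (Neg.neg : ℝ → ℝ) :=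
    (Homeomorph.neg ℝ).measurableEmbedding
  have hpre : (Neg.neg : ℝ → ℝ) ⁻¹' (Ioo (-1:ℝ) 1) = Ioo (-1:ℝ) 1 := by
    ext x; simp only [mem_preimage, mem_Ioo]; constructor <;> intro h' <;>
      exact ⟨by linarith [h'.2], by linarith [h'.1]⟩
  have hmap : (volume.restrict (Ioo (-1:ℝ) 1)).map Neg.neg
      = volume.restrict (Ioo (-1:ℝ) 1) := by
    have := hemb.restrict_map (volume : Measure ℝ) (Ioo (-1:ℝ) 1)
    rw [Measure.map_neg_eq_self (volume : Measure ℝ), hpre] at this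
    exact this.symm
  have h' : Integrable φ ((volume.restrict (Ioo (-1:ℝ) 1)).map Neg.neg) := by
    rw [hmap]; exact h
  exact hemb.integrable_map_iff.mp h'

lemma JHyp.neg {u u' u'' : ℝ → ℂ} (H : JHyp u u' u'') :
    JHyp (fun x => u (-x)) (fun x => -u' (-x)) (fun x => u'' (-x)) := by
  obtain ⟨hi1, hi2, hftc1, hftc2, h0, h2⟩ := H
  refine ⟨?_, ?_, ?_, ?_, ?_, ?_⟩
  · intro x hx y hy
    have := (IntervalIntegrable.iff_comp_neg).mp (hi1 _ (neg_mem_Ioo hx) _ (neg_mem_Ioo hy))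
    exact (by simpa using this : IntervalIntegrable (fun t => u' (-t)) volume x y).neg
  · intro x hx y hy
    have := (IntervalIntegrable.iff_comp_neg).mp (hi2 _ (neg_mem_Ioo hx) _ (neg_mem_Ioo hy))
    simpa using this
  · intro x hx y hy
    calc u (-y) - u (-x) = ∫ t in -x..(-y), u' t :=
          hftc1 _ (neg_mem_Ioo hx) _ (neg_mem_Ioo hy)
      _ = -∫ t in -y..(-x), u' t := intervalIntegral.integral_symm _ _
      _ = -∫ t in x..y, u' (-t) := by rw [intervalIntegral.integral_comp_neg fun t => u' t]
      _ = ∫ t in x..y, -u' (-t) := (intervalIntegral.integral_neg).symm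
  · intro x hx y hy
    calc -u' (-y) - -u' (-x) = u' (-x) - u' (-y) := by ring
      _ = ∫ t in -y..(-x), u'' t := hftc2 _ (neg_mem_Ioo hy) _ (neg_mem_Ioo hx)
      _ = ∫ t in x..y, u'' (-t) := (intervalIntegral.integral_comp_neg fun t => u'' t).symm
  · have := integrableOn_symm h0
    simpa using this
  · have := integrableOn_symm h2
    simpa using this

lemma continuousOn_one_sub_rpow (r : ℝ) {x y : ℝ} (hy : y < 1) :
    ContinuousOn (fun t : ℝ => (1 - t) ^ r) (Icc x y) := by
  apply ContinuousOn.rpow_const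
  · exact (continuous_const.sub continuous_id).continuousOn
  · intro t ht
    exact Or.inl (by simp only [mem_Icc] at ht; nlinarith [ht.2])

lemma integrableOn_one_sub_rpow (r : ℝ) {x y : ℝ} (hy : y < 1) :
    IntegrableOn (fun t : ℝ => (1 - t) ^ r) (Ioc x y) := by
  rcases le_or_gt x y with h | h
  · exact ((continuousOn_one_sub_rpow r hy).integrableOn_compact isCompact_Icc).mono_set
      Ioc_subset_Icc_self
  · simp [Ioc_eq_empty (not_lt.mpr h.le)]

lemma integral_one_sub_rpow {r : ℝ} (hr : r ≠ -1) {x y : ℝ} (hxy : x ≤ y) (hy : y < 1) :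
    ∫ t in x..y, (1 - t) ^ r = ((1 - x) ^ (r + 1) - (1 - y) ^ (r + 1)) / (r + 1) := by
  have h1 : (∫ t in x..y, (1 - t) ^ r) = ∫ s in (1 - y)..(1 - x), s ^ r :=
    intervalIntegral.integral_comp_sub_left (fun s => s ^ r) 1
  rw [h1, integral_rpow]
  right
  refine ⟨hr, ?_⟩
  intro h0
  rw [mem_uIcc] at h0
  rcases h0 with ⟨h0, _⟩ | ⟨h0, _⟩ <;> linarith

set_option maxHeartbeats 1000000 in
lemma JHyp.deriv_bound {u u' u'' : ℝ → ℂ} (H : JHyp u u' u'') :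
    ∃ C : ℝ, 0 ≤ C ∧ ∀ x ∈ Ico (0:ℝ) 1, ‖u' x‖ ≤ C * (1 - x) ^ (-(4:ℝ)⁻¹) := by
  obtain ⟨M, hMdef⟩ : ∃ M : ℝ, M = ∫ t in Ioo (-1:ℝ) 1, ‖u'' t‖ ^ 2 * (1 - t ^ 2) := ⟨_, rfl⟩
  have hM0 : 0 ≤ M := by
    rw [hMdef]
    exact setIntegral_nonneg measurableSet_Ioo
      (fun t ht => by
        simp only [mem_Ioo] at ht
        have : (0:ℝ) < 1 - t ^ 2 := by nlinarith [ht.1, ht.2]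
        positivity)
  refine ⟨‖u' 0‖ + Real.sqrt 2 * Real.sqrt (M + 1), by positivity, ?_⟩
  rintro x ⟨hx0, hx1⟩
  have h0mem : (0:ℝ) ∈ Ioo (-1:ℝ) 1 := by norm_num
  have hxmem : x ∈ Ioo (-1:ℝ) 1 := ⟨by linarith, hx1⟩
  have h1x : (0:ℝ) < 1 - x := by linarith
  obtain ⟨S, hSdef⟩ : ∃ S : ℝ, S = Real.sqrt (2 * (1 - x) ^ (-(2:ℝ)⁻¹)) := ⟨_, rfl⟩
  obtain ⟨T, hTdef⟩ : ∃ T : ℝ, T = Real.sqrt (M + 1) := ⟨_, rfl⟩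
  have hJ : (0:ℝ) < 2 * (1 - x) ^ (-(2:ℝ)⁻¹) :=
    mul_pos two_pos (Real.rpow_pos_of_pos h1x _)
  have hS : 0 < S := by rw [hSdef]; exact Real.sqrt_pos.mpr hJ
  have hT : 0 < T := by rw [hTdef]; exact Real.sqrt_pos.mpr (by linarith)
  have hS2 : S ^ 2 = 2 * (1 - x) ^ (-(2:ℝ)⁻¹) := by rw [hSdef]; exact Real.sq_sqrt hJ.le
  have hT2 : T ^ 2 = M + 1 := by rw [hTdef]; exact Real.sq_sqrt (by linarith)
  obtain ⟨l, hldef⟩ : ∃ l : ℝ, l = S / T := ⟨_, rfl⟩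
  have hl : 0 < l := hldef ▸ div_pos hS hT
  -- pointwise bound on Ioc 0 x
  have key : ∀ t ∈ Ioc (0:ℝ) x, ‖u'' t‖ ≤
      (l/2) * (‖u'' t‖ ^ 2 * (1 - t ^ 2)) + (2*l)⁻¹ * (1 - t) ^ (-(3:ℝ)/2) := by
    rintro t ⟨ht0, htx⟩
    have hc : (0:ℝ) < 1 - t ^ 2 := by nlinarith
    have h1t : (0:ℝ) < 1 - t := by nlinarith
    obtain ⟨w, hw⟩ : ∃ w : ℝ, w = ‖u'' t‖ := ⟨_, rfl⟩
    rw [← hw]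
    have hw0 : 0 ≤ w := by rw [hw]; exact norm_nonneg _
    have step1 : w ≤ (l/2) * (w ^ 2 * (1 - t ^ 2)) + (2*l)⁻¹ * (1 - t ^ 2)⁻¹ := by
      have heq : (l/2) * (w ^ 2 * (1 - t ^ 2)) + (2*l)⁻¹ * (1 - t ^ 2)⁻¹
          = ((l * (1 - t ^ 2) * w) ^ 2 + 1) / (2 * l * (1 - t ^ 2)) := by
        field_simp
      rw [heq, le_div_iff₀ (mul_pos (mul_pos two_pos hl) hc)]
      nlinarith [sq_nonneg (l * (1 - t ^ 2) * w - 1)]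
    have step2 : (1 - t ^ 2)⁻¹ ≤ (1 - t) ^ (-(3:ℝ)/2) := by
      have h1 : (1 - t ^ 2)⁻¹ ≤ (1 - t)⁻¹ := by
        apply inv_anti₀ h1t
        nlinarith
      have h2 : (1 - t)⁻¹ = (1 - t) ^ (-1:ℝ) := (Real.rpow_neg_one _).symm
      have h3 : (1 - t) ^ (-1:ℝ) ≤ (1 - t) ^ (-(3:ℝ)/2) :=
        Real.rpow_le_rpow_of_exponent_ge h1t (by linarith) (by norm_num)
      linarith
    have : (2*l)⁻¹ * (1 - t ^ 2)⁻¹ ≤ (2*l)⁻¹ * (1 - t) ^ (-(3:ℝ)/2) :=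
      mul_le_mul_of_nonneg_left step2 (inv_nonneg.mpr (by linarith))
    linarith
  -- integrability on Ioc 0 x
  have hsub : Ioc (0:ℝ) x ⊆ Ioo (-1:ℝ) 1 :=
    fun t ht => ⟨by linarith [ht.1], lt_of_le_of_lt ht.2 hx1⟩
  have hI1 : IntegrableOn (fun t => ‖u'' t‖) (Ioc (0:ℝ) x) :=
    (intervalIntegrable_iff_integrableOn_Ioc_of_le hx0).mp (H.hi2 _ h0mem _ hxmem).norm
  have hI2a : IntegrableOn (fun t => ‖u'' t‖ ^ 2 * (1 - t ^ 2)) (Ioc (0:ℝ) x) :=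
    H.h2.mono_set hsub
  have hI2b : IntegrableOn (fun t : ℝ => (1 - t) ^ (-(3:ℝ)/2)) (Ioc (0:ℝ) x) :=
    integrableOn_one_sub_rpow _ hx1
  -- integral comparison
  have hint1 : ∫ t in Ioc (0:ℝ) x, ‖u'' t‖ ≤
      (l/2) * M + (2*l)⁻¹ * (2 * (1 - x) ^ (-(2:ℝ)⁻¹)) := by
    have hIsum : IntegrableOn (fun t =>
        (l/2) * (‖u'' t‖ ^ 2 * (1 - t ^ 2)) + (2*l)⁻¹ * (1 - t) ^ (-(3:ℝ)/2))
        (Ioc (0:ℝ) x) := (hI2a.const_mul (l/2)).add (hI2b.const_mul (2*l)⁻¹)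
    have hmono := setIntegral_mono_on hI1 hIsum measurableSet_Ioc key
    rw [integral_add (hI2a.const_mul (l/2)) (hI2b.const_mul (2*l)⁻¹),
      integral_const_mul, integral_const_mul] at hmono
    have hMle : ∫ t in Ioc (0:ℝ) x, (‖u'' t‖ ^ 2 * (1 - t ^ 2)) ≤ M := by
      rw [hMdef]
      apply setIntegral_mono_set H.h2
      · apply (ae_restrict_iff' measurableSet_Ioo).mpr
        apply Eventually.of_forall
        intro t ht
        simp only [mem_Ioo] at ht
        have : (0:ℝ) < 1 - t ^ 2 := by nlinarith [ht.1, ht.2]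
        positivity
      · exact HasSubset.Subset.eventuallyLE hsub
    have hJle : ∫ t in Ioc (0:ℝ) x, (1 - t) ^ (-(3:ℝ)/2) ≤ 2 * (1 - x) ^ (-(2:ℝ)⁻¹) := by
      have hcomp := integral_one_sub_rpow (by norm_num : (-(3:ℝ)/2) ≠ -1) hx0 hx1
      rw [intervalIntegral.integral_of_le hx0] at hcomp
      rw [hcomp]
      have e1 : (-(3:ℝ)/2 + 1) = -(2:ℝ)⁻¹ := by norm_num
      rw [e1]
      have h10 : (1:ℝ) - 0 = 1 := by norm_num
      rw [h10, Real.one_rpow]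
      have heq : ((1:ℝ) - (1 - x) ^ (-(2:ℝ)⁻¹)) / (-(2:ℝ)⁻¹)
          = 2 * (1 - x) ^ (-(2:ℝ)⁻¹) - 2 := by
        field_simp
        ring
      rw [heq]
      linarith
    have g1 : (l/2) * ∫ t in Ioc (0:ℝ) x, (‖u'' t‖ ^ 2 * (1 - t ^ 2)) ≤ (l/2) * M :=
      mul_le_mul_of_nonneg_left hMle (by linarith)
    have g2 : (2*l)⁻¹ * ∫ t in Ioc (0:ℝ) x, (1 - t) ^ (-(3:ℝ)/2)
        ≤ (2*l)⁻¹ * (2 * (1 - x) ^ (-(2:ℝ)⁻¹)) :=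
      mul_le_mul_of_nonneg_left hJle (inv_nonneg.mpr (by linarith))
    linarith [hmono, g1, g2]
  -- the algebraic bound
  have halg : (l/2) * M + (2*l)⁻¹ * (2 * (1 - x) ^ (-(2:ℝ)⁻¹)) ≤ S * T := by
    rw [← hS2]
    have e1 : (2*l)⁻¹ * S ^ 2 = S * T / 2 := by
      rw [hldef]
      field_simp
    have e2 : (l/2) * (M + 1) = S * T / 2 := by
      rw [hldef, ← hT2]
      field_simp
    have e3 : (l/2) * M ≤ (l/2) * (M + 1) := by nlinarith
    linarith
  have hST : S * T = Real.sqrt 2 * Real.sqrt (M + 1) * (1 - x) ^ (-(4:ℝ)⁻¹) := by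
    rw [hSdef, hTdef, Real.sqrt_mul (by norm_num : (0:ℝ) ≤ 2)]
    have : Real.sqrt ((1 - x) ^ (-(2:ℝ)⁻¹)) = (1 - x) ^ (-(4:ℝ)⁻¹) := by
      rw [Real.sqrt_eq_rpow, ← Real.rpow_mul h1x.le]
      norm_num
    rw [this]
    ring
  -- FTC and norms
  have hftc := H.hftc2 _ h0mem _ hxmem
  have hnorm : ‖∫ t in (0:ℝ)..x, u'' t‖ ≤ ∫ t in Ioc (0:ℝ) x, ‖u'' t‖ :=
    calc ‖∫ t in (0:ℝ)..x, u'' t‖ ≤ ∫ t in (0:ℝ)..x, ‖u'' t‖ :=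
          intervalIntegral.norm_integral_le_integral_norm hx0
      _ = ∫ t in Ioc (0:ℝ) x, ‖u'' t‖ := intervalIntegral.integral_of_le hx0
  have hux : ‖u' x‖ ≤ ‖u' 0‖ + S * T := by
    have heq : u' x = u' 0 + ∫ t in (0:ℝ)..x, u'' t := by rw [← hftc]; ring
    calc ‖u' x‖ = ‖u' 0 + ∫ t in (0:ℝ)..x, u'' t‖ := by rw [← heq]
      _ ≤ ‖u' 0‖ + ‖∫ t in (0:ℝ)..x, u'' t‖ := norm_add_le _ _
      _ ≤ ‖u' 0‖ + S * T := by linarith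
  have hone : (1:ℝ) ≤ (1 - x) ^ (-(4:ℝ)⁻¹) :=
    Real.one_le_rpow_of_pos_of_le_one_of_nonpos h1x (by linarith) (by norm_num)
  calc ‖u' x‖ ≤ ‖u' 0‖ + S * T := hux
    _ = ‖u' 0‖ + Real.sqrt 2 * Real.sqrt (M + 1) * (1 - x) ^ (-(4:ℝ)⁻¹) := by rw [hST]
    _ ≤ ‖u' 0‖ * (1 - x) ^ (-(4:ℝ)⁻¹)
        + Real.sqrt 2 * Real.sqrt (M + 1) * (1 - x) ^ (-(4:ℝ)⁻¹) := by
        have := mul_le_mul_of_nonneg_left hone (norm_nonneg (u' 0))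
        linarith [this]
    _ = (‖u' 0‖ + Real.sqrt 2 * Real.sqrt (M + 1)) * (1 - x) ^ (-(4:ℝ)⁻¹) := by ring

set_option maxHeartbeats 1000000 in
lemma JHyp.diff_bound {u u' u'' : ℝ → ℂ} (H : JHyp u u' u'') {C₁ : ℝ} (hC₁0 : 0 ≤ C₁)
    (hC₁ : ∀ x ∈ Ico (0:ℝ) 1, ‖u' x‖ ≤ C₁ * (1 - x) ^ (-(4:ℝ)⁻¹)) :
    ∀ x y : ℝ, 0 ≤ x → x ≤ y → y < 1 →
      ‖u y - u x‖ ≤ (4/3) * C₁ * (1 - x) ^ ((3:ℝ)/4) := by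
  intro x y hx0 hxy hy1
  have hx1 : x < 1 := lt_of_le_of_lt hxy hy1
  have hxmem : x ∈ Ioo (-1:ℝ) 1 := ⟨by linarith, hx1⟩
  have hymem : y ∈ Ioo (-1:ℝ) 1 := ⟨by linarith, hy1⟩
  have hftc := H.hftc1 _ hxmem _ hymem
  have hI1 : IntegrableOn (fun t => ‖u' t‖) (Ioc x y) :=
    (intervalIntegrable_iff_integrableOn_Ioc_of_le hxy).mp (H.hi1 _ hxmem _ hymem).norm
  have hI2 : IntegrableOn (fun t : ℝ => C₁ * (1 - t) ^ (-(4:ℝ)⁻¹)) (Ioc x y) :=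
    (integrableOn_one_sub_rpow _ hy1).const_mul _
  have key : ∀ t ∈ Ioc x y, ‖u' t‖ ≤ C₁ * (1 - t) ^ (-(4:ℝ)⁻¹) := by
    rintro t ⟨ht1, ht2⟩
    exact hC₁ t ⟨by linarith, lt_of_le_of_lt ht2 hy1⟩
  have hmono := setIntegral_mono_on hI1 hI2 measurableSet_Ioc key
  rw [integral_const_mul] at hmono
  have hval : ∫ t in Ioc x y, (1 - t) ^ (-(4:ℝ)⁻¹) ≤ (4/3) * (1 - x) ^ ((3:ℝ)/4) := by
    have hcomp := integral_one_sub_rpow (by norm_num : (-(4:ℝ)⁻¹) ≠ -1) hxy hy1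
    rw [intervalIntegral.integral_of_le hxy] at hcomp
    rw [hcomp]
    have e1 : (-(4:ℝ)⁻¹ + 1) = (3:ℝ)/4 := by norm_num
    rw [e1]
    have h2 : (0:ℝ) ≤ (1 - y) ^ ((3:ℝ)/4) := Real.rpow_nonneg (by linarith) _
    rw [div_le_iff₀ (by norm_num : (0:ℝ) < 3/4)]
    linarith
  calc ‖u y - u x‖ = ‖∫ t in x..y, u' t‖ := by rw [hftc]
    _ ≤ ∫ t in x..y, ‖u' t‖ := intervalIntegral.norm_integral_le_integral_norm hxy
    _ = ∫ t in Ioc x y, ‖u' t‖ := intervalIntegral.integral_of_le hxy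
    _ ≤ C₁ * ∫ t in Ioc x y, (1 - t) ^ (-(4:ℝ)⁻¹) := hmono
    _ ≤ C₁ * ((4/3) * (1 - x) ^ ((3:ℝ)/4)) := mul_le_mul_of_nonneg_left hval hC₁0
    _ = (4/3) * C₁ * (1 - x) ^ ((3:ℝ)/4) := by ring

set_option maxHeartbeats 1600000 in
lemma JHyp.bounds {u u' u'' : ℝ → ℂ} (H : JHyp u u' u'') :
    ∃ C : ℝ, 0 ≤ C ∧ ∀ x ∈ Ico (0:ℝ) 1,
      ‖u' x‖ ≤ C * (1 - x) ^ (-(4:ℝ)⁻¹) ∧ ‖u x‖ ≤ C * (1 - x) ^ ((3:ℝ)/4) := by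
  obtain ⟨C₁, hC₁0, hC₁⟩ := H.deriv_bound
  obtain ⟨D, hDdef⟩ : ∃ D : ℝ, D = (4/3) * C₁ := ⟨_, rfl⟩
  have hD0 : 0 ≤ D := by rw [hDdef]; linarith
  have hdiff : ∀ x y : ℝ, 0 ≤ x → x ≤ y → y < 1 →
      ‖u y - u x‖ ≤ D * (1 - x) ^ ((3:ℝ)/4) := by
    intro x y h1 h2 h3
    rw [hDdef]
    exact H.diff_bound hC₁0 hC₁ x y h1 h2 h3
  -- the approximating sequence
  obtain ⟨z, hzdef⟩ : ∃ z : ℕ → ℝ, z = fun n : ℕ => 1 - ((n:ℝ)+1)⁻¹ := ⟨_, rfl⟩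
  have hzval : ∀ n : ℕ, z n = 1 - ((n:ℝ)+1)⁻¹ := fun n => by rw [hzdef]
  have hzmem : ∀ n : ℕ, z n ∈ Ico (0:ℝ) 1 := by
    intro n
    have h1 : (0:ℝ) < (n:ℝ)+1 := by positivity
    have h2 : ((n:ℝ)+1)⁻¹ ≤ 1 := by
      rw [inv_le_one_iff₀]; right; linarith [Nat.cast_nonneg (α := ℝ) n]
    have h3 : (0:ℝ) < ((n:ℝ)+1)⁻¹ := by positivity
    rw [hzval n]
    exact ⟨by linarith, by linarith⟩
  have hzmono : Monotone z := by
    intro n m hnm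
    rw [hzval n, hzval m]
    have : ((m:ℝ)+1)⁻¹ ≤ ((n:ℝ)+1)⁻¹ := by
      apply inv_anti₀ (by positivity)
      have := (Nat.cast_le (α := ℝ)).mpr hnm
      linarith
    linarith
  have hztends : Tendsto z atTop (𝓝 1) := by
    rw [hzdef]
    have h1 : Tendsto (fun n : ℕ => ((n:ℝ)+1)⁻¹) atTop (𝓝 0) := by
      simpa [one_div] using tendsto_one_div_add_atTop_nhds_zero_nat (𝕜 := ℝ)
    simpa using tendsto_const_nhds.sub h1
  have hbtends : Tendsto (fun N : ℕ => D * (1 - z N) ^ ((3:ℝ)/4)) atTop (𝓝 0) := by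
    have h1 : Tendsto (fun N : ℕ => 1 - z N) atTop (𝓝 0) := by
      have h0 := (tendsto_const_nhds (x := (1:ℝ)) (f := atTop (α := ℕ))).sub hztends
      simpa using h0
    have h2 : Tendsto (fun N : ℕ => (1 - z N) ^ ((3:ℝ)/4)) atTop (𝓝 0) := by
      have hco := (Real.continuousAt_rpow_const 0 ((3:ℝ)/4) (Or.inr (by norm_num))).tendsto
      rw [Real.zero_rpow (by norm_num : ((3:ℝ)/4) ≠ 0)] at hco
      exact hco.comp h1
    simpa using tendsto_const_nhds.mul h2
  -- Cauchy sequence and its limit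
  have hcauchy : CauchySeq (fun n => u (z n)) := by
    apply cauchySeq_of_le_tendsto_0 (fun N => D * (1 - z N) ^ ((3:ℝ)/4)) _ hbtends
    intro n m N hn hm
    have key : ∀ a b : ℕ, N ≤ a → a ≤ b → dist (u (z a)) (u (z b)) ≤ D * (1 - z N) ^ ((3:ℝ)/4) := by
      intro a b ha hab
      rw [dist_eq_norm, norm_sub_rev]
      calc ‖u (z b) - u (z a)‖ ≤ D * (1 - z a) ^ ((3:ℝ)/4) :=
            hdiff (z a) (z b) (hzmem a).1 (hzmono hab) (hzmem b).2
        _ ≤ D * (1 - z N) ^ ((3:ℝ)/4) := by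
            apply mul_le_mul_of_nonneg_left _ hD0
            apply Real.rpow_le_rpow (by linarith [(hzmem a).2]) _ (by norm_num)
            linarith [hzmono ha]
    rcases le_total n m with h | h
    · exact key n m hn h
    · rw [dist_comm]; exact key m n hm h
  obtain ⟨L, hL⟩ := cauchySeq_tendsto_of_complete hcauchy
  -- the limit bound
  have hlim : ∀ x ∈ Ico (0:ℝ) 1, ‖u x - L‖ ≤ D * (1 - x) ^ ((3:ℝ)/4) := by
    rintro x ⟨hx0, hx1⟩
    have hev : ∀ᶠ n in atTop, x ≤ z n := hztends.eventually (eventually_ge_nhds hx1)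
    have h1 : Tendsto (fun n => ‖u (z n) - u x‖) atTop (𝓝 ‖L - u x‖) :=
      (hL.sub tendsto_const_nhds).norm
    have h2 : ∀ᶠ n in atTop, ‖u (z n) - u x‖ ≤ D * (1 - x) ^ ((3:ℝ)/4) :=
      hev.mono fun n hn => hdiff x (z n) hx0 hn (hzmem n).2
    have := le_of_tendsto h1 h2
    rwa [norm_sub_rev] at this
  -- the limit is zero
  have hL0 : L = 0 := by
    by_contra hne
    have hLpos : 0 < ‖L‖ := norm_pos_iff.mpr hne
    obtain ⟨ε, hεdef⟩ : ∃ ε : ℝ, ε = min 1 ((‖L‖/(2*(D+1))) ^ ((4:ℝ)/3)) := ⟨_, rfl⟩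
    have hq : (0:ℝ) < ‖L‖/(2*(D+1)) := by positivity
    have hε0 : 0 < ε := by
      rw [hεdef]
      exact lt_min one_pos (Real.rpow_pos_of_pos hq _)
    have hε1 : ε ≤ 1 := by rw [hεdef]; exact min_le_left _ _
    have hεbound : D * ε ^ ((3:ℝ)/4) ≤ ‖L‖/2 := by
      have h1 : ε ≤ (‖L‖/(2*(D+1))) ^ ((4:ℝ)/3) := by rw [hεdef]; exact min_le_right _ _
      have h2 : ε ^ ((3:ℝ)/4) ≤ ((‖L‖/(2*(D+1))) ^ ((4:ℝ)/3)) ^ ((3:ℝ)/4) :=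
        Real.rpow_le_rpow hε0.le h1 (by norm_num)
      have h3 : ((‖L‖/(2*(D+1))) ^ ((4:ℝ)/3)) ^ ((3:ℝ)/4) = ‖L‖/(2*(D+1)) := by
        rw [← Real.rpow_mul hq.le]
        norm_num
      rw [h3] at h2
      have h4 : D * ε ^ ((3:ℝ)/4) ≤ D * (‖L‖/(2*(D+1))) :=
        mul_le_mul_of_nonneg_left h2 hD0
      have h5 : D * (‖L‖/(2*(D+1))) ≤ ‖L‖/2 := by
        have he : D * (‖L‖/(2*(D+1))) = (D*‖L‖)/(2*(D+1)) := by ring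
        rw [he, div_le_div_iff₀ (by positivity) (by norm_num : (0:ℝ) < 2)]
        nlinarith
      linarith
    obtain ⟨c, hcdef⟩ : ∃ c : ℝ, c = 1 - ε := ⟨_, rfl⟩
    have hc0 : 0 ≤ c := by rw [hcdef]; linarith
    have hc1 : c < 1 := by rw [hcdef]; linarith
    have hlow : ∀ t ∈ Ioo c 1, ‖L‖/2 ≤ ‖u t‖ := by
      rintro t ⟨ht1, ht2⟩
      have htmem : t ∈ Ico (0:ℝ) 1 := ⟨by linarith, ht2⟩
      have h1 : ‖u t - L‖ ≤ D * (1 - t) ^ ((3:ℝ)/4) := hlim t htmem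
      have h2 : (1 - t) ^ ((3:ℝ)/4) ≤ ε ^ ((3:ℝ)/4) := by
        apply Real.rpow_le_rpow (by linarith) _ (by norm_num)
        rw [hcdef] at ht1
        linarith
      have h3 : ‖u t - L‖ ≤ ‖L‖/2 := by
        calc ‖u t - L‖ ≤ D * (1 - t) ^ ((3:ℝ)/4) := h1
          _ ≤ D * ε ^ ((3:ℝ)/4) := mul_le_mul_of_nonneg_left h2 hD0
          _ ≤ ‖L‖/2 := hεbound
      have h4 : ‖L‖ - ‖u t‖ ≤ ‖u t - L‖ := by
        have := norm_sub_norm_le (u t) L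
        have h5 := norm_sub_norm_le L (u t)
        rw [norm_sub_rev] at h5
        linarith
      linarith
    -- contradiction via non-integrability of (1-t)⁻¹
    have hIioc : IntegrableOn (fun t => ‖u t‖ ^ 2 * (1 - t ^ 2)⁻¹) (Ioo c 1) :=
      H.h0.mono_set (fun t ht => ⟨by linarith [ht.1], ht.2⟩)
    obtain ⟨r, hrdef⟩ : ∃ r : ℝ, r = 8/‖L‖^2 := ⟨_, rfl⟩
    have hr0 : 0 ≤ r := by rw [hrdef]; positivity
    have hcontra : IntegrableOn (fun t : ℝ => (1-t)⁻¹) (Ioo c 1) := by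
      apply Integrable.mono' (hIioc.const_mul r)
      · exact ((measurable_const.sub measurable_id).inv).aestronglyMeasurable
      · apply (ae_restrict_iff' measurableSet_Ioo).mpr
        apply Eventually.of_forall
        rintro t ⟨ht1, ht2⟩
        have h1t : (0:ℝ) < 1 - t := by linarith
        have h1t2 : (0:ℝ) < 1 - t^2 := by nlinarith
        have hQ0 : (0:ℝ) ≤ (1 - t^2)⁻¹ := by positivity
        have h1 : (1-t)⁻¹ ≤ 2 * (1 - t^2)⁻¹ := by
          have ha : (1 - t^2) ≤ 2*(1-t) := by nlinarith
          have hb : (2*(1-t))⁻¹ ≤ (1 - t^2)⁻¹ := inv_anti₀ h1t2 ha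
          have hc : (2*(1-t))⁻¹ = (1-t)⁻¹ / 2 := by
            rw [mul_inv]
            ring
          rw [hc] at hb
          linarith
        have h2 : ‖L‖^2/4 ≤ ‖u t‖^2 := by
          have := hlow t ⟨ht1, ht2⟩
          nlinarith [norm_nonneg (u t), norm_nonneg L]
        have h3 : (‖L‖^2/4) * (1 - t^2)⁻¹ ≤ ‖u t‖^2 * (1 - t^2)⁻¹ :=
          mul_le_mul_of_nonneg_right h2 hQ0
        have hLne : ‖L‖ ≠ 0 := hLpos.ne'
        have hr2 : r * (‖L‖^2/4) = 2 := by
          rw [hrdef, div_mul_div_comm,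
            div_eq_iff (mul_ne_zero (pow_ne_zero 2 hLne) (by norm_num : (4:ℝ) ≠ 0))]
          ring
        have h4 : r * ((‖L‖^2/4) * (1 - t^2)⁻¹) = 2 * (1 - t^2)⁻¹ := by
          rw [← mul_assoc, hr2]
        have h5 : ‖(1-t)⁻¹‖ = (1-t)⁻¹ := Real.norm_of_nonneg (by positivity)
        rw [h5]
        calc (1-t)⁻¹ ≤ 2 * (1 - t^2)⁻¹ := h1
          _ = r * ((‖L‖^2/4) * (1 - t^2)⁻¹) := h4.symm
          _ ≤ r * (‖u t‖^2 * (1 - t^2)⁻¹) := mul_le_mul_of_nonneg_left h3 hr0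
    have hII : IntervalIntegrable (fun t : ℝ => (1-t)⁻¹) volume c 1 := by
      rw [intervalIntegrable_iff_integrableOn_Ioc_of_le hc1.le]
      exact hcontra.congr_set_ae (Ioo_ae_eq_Ioc (μ := volume) (a := c) (b := 1)).symm
    have hII2 : IntervalIntegrable (fun t : ℝ => (t-1)⁻¹) volume c 1 := by
      have heq : (fun t : ℝ => (t-1)⁻¹) = fun t : ℝ => -((1-t)⁻¹) := by
        funext t
        rw [← inv_neg]
        ring_nf
      rw [heq]
      exact hII.neg
    rcases intervalIntegrable_sub_inv_iff.mp hII2 with h | h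
    · exact absurd h hc1.ne
    · exact h (right_mem_uIcc)
  refine ⟨D, hD0, fun x hx => ⟨?_, ?_⟩⟩
  · refine (hC₁ x hx).trans (mul_le_mul_of_nonneg_right ?_ (Real.rpow_nonneg ?_ _))
    · rw [hDdef]; linarith
    · rcases hx with ⟨_, hx1⟩; linarith
  · have := hlim x hx
    rwa [hL0, sub_zero] at this

set_option maxHeartbeats 800000 in
lemma tendsto_at_one {f f' f'' g g' g'' : ℝ → ℂ} (Hf : JHyp f f' f'') (Hg : JHyp g g' g'') :
    Tendsto (fun x => f' x * star (g x)) (𝓝[<] (1:ℝ)) (𝓝 0) := by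
  obtain ⟨Cf, hCf0, hCf⟩ := Hf.bounds
  obtain ⟨Cg, hCg0, hCg⟩ := Hg.bounds
  apply squeeze_zero_norm' (a := fun x => (Cf * Cg) * (1 - x) ^ ((2:ℝ)⁻¹))
  · filter_upwards [Ioo_mem_nhdsLT_of_mem
      (show (1:ℝ) ∈ Ioc (0:ℝ) 1 from ⟨one_pos, le_refl 1⟩)] with x hx
    rcases hx with ⟨hx0, hx1⟩
    have hxm : x ∈ Ico (0:ℝ) 1 := ⟨hx0.le, hx1⟩
    have h1x : (0:ℝ) < 1 - x := by linarith
    have h1 := (hCf x hxm).1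
    have h2 := (hCg x hxm).2
    have hmul : ‖f' x * star (g x)‖ = ‖f' x‖ * ‖g x‖ := by
      rw [norm_mul, norm_star]
    rw [hmul]
    calc ‖f' x‖ * ‖g x‖
        ≤ (Cf * (1 - x) ^ (-(4:ℝ)⁻¹)) * (Cg * (1 - x) ^ ((3:ℝ)/4)) := by
          apply mul_le_mul h1 h2 (norm_nonneg _)
          positivity
      _ = (Cf * Cg) * ((1 - x) ^ (-(4:ℝ)⁻¹) * (1 - x) ^ ((3:ℝ)/4)) := by ring
      _ = (Cf * Cg) * (1 - x) ^ ((2:ℝ)⁻¹) := by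
          rw [← Real.rpow_add h1x]
          norm_num
  · have h1 : Tendsto (fun x : ℝ => 1 - x) (𝓝[<] (1:ℝ)) (𝓝 0) := by
      have h0 : Tendsto (fun x : ℝ => 1 - x) (𝓝 (1:ℝ)) (𝓝 0) := by
        have hc : Continuous (fun x : ℝ => 1 - x) := continuous_const.sub continuous_id
        have := hc.tendsto (1:ℝ)
        simpa using this
      exact h0.mono_left nhdsWithin_le_nhds
    have h2 : Tendsto (fun x : ℝ => (1 - x) ^ ((2:ℝ)⁻¹)) (𝓝[<] (1:ℝ)) (𝓝 0) := by
      have hco := (Real.continuousAt_rpow_const 0 ((2:ℝ)⁻¹) (Or.inr (by norm_num))).tendsto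
      rw [Real.zero_rpow (by norm_num : ((2:ℝ)⁻¹) ≠ 0)] at hco
      exact hco.comp h1
    have h3 := (tendsto_const_nhds (x := Cf * Cg) (f := 𝓝[<] (1:ℝ))).mul h2
    simpa using h3

/-- The strong limit-point condition at both endpoints: for all `f, g` in the maximal
domain `Δ` of the Jacobi expression, `f'(x)·conj(g(x)) → 0` as `x → 1⁻` and as
`x → -1⁺`. -/
theorem strong_limit_point (k : ℝ) (hk : 0 ≤ k)
    (f f' f'' g g' g'' : ℝ → ℂ)
    (hf : InJacobiMaxDomain k f f' f'') (hg : InJacobiMaxDomain k g g' g'') :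
    Tendsto (fun x => f' x * star (g x)) (𝓝[<] (1 : ℝ)) (𝓝 0) ∧
    Tendsto (fun x => f' x * star (g x)) (𝓝[>] (-1 : ℝ)) (𝓝 0) := by
  have Hf : JHyp f f' f'' := JHyp.of_dom hk hf
  have Hg : JHyp g g' g'' := JHyp.of_dom hk hg
  constructor
  · exact tendsto_at_one Hf Hg
  · -- reflect
    have HF := Hf.neg
    have HG := Hg.neg
    have h1 : Tendsto (fun y => (-f' (-y)) * star (g (-y))) (𝓝[<] (1:ℝ)) (𝓝 0) :=
      tendsto_at_one HF HG
    have hneg : Tendsto (fun x : ℝ => -x) (𝓝[>] (-1:ℝ)) (𝓝[<] (1:ℝ)) := by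
      rw [tendsto_nhdsWithin_iff]
      constructor
      · have hc : Tendsto (fun x : ℝ => -x) (𝓝 (-1:ℝ)) (𝓝 (1:ℝ)) := by
          have := continuous_neg.tendsto (-1:ℝ)
          simpa using this
        exact hc.mono_left nhdsWithin_le_nhds
      · filter_upwards [self_mem_nhdsWithin] with x hx
        simp only [mem_Iio]
        simp only [mem_Ioi] at hx
        linarith
    have h2 := h1.comp hneg
    have h3 : (fun x : ℝ => (-f' (-(-x))) * star (g (-(-x)))) =
        fun x : ℝ => -(f' x * star (g x)) := by
      funext x
      rw [neg_neg]
      ring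
    rw [Function.comp_def] at h2
    rw [h3] at h2
    have h4 := h2.neg
    rw [neg_zero] at h4
    simpa using h4
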